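/- In the singular braid monoid SB_n, the element σⁿ, where σ = σ₁σ₂⋯σ_{n-1}, commutes with x₁ (and hence with every xᵢ). -/

import Mathlib

/-- Generators of the singular braid monoid `SB_n`: `s i` is `σ_{i+1}`, `sInv i` is
`σ_{i+1}⁻¹`, and `x i` is `x_{i+1}`, for `i : Fin (n-1)`. -/
inductive SBGen (n : ℕ) : Type
  | s (i : Fin (n - 1))
  | sInv (i : Fin (n - 1))
  | x (i : Fin (n - 1))

open FreeMonoid in
/-- The defining relations of the singular braid monoid `SB_n`. -/
inductive SBRel (n : ℕ) : FreeMonoid (SBGen n) → FreeMonoid (SBGen n) → Prop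
  | comm_ss (i j : Fin (n - 1)) (h : (i : ℕ) + 1 < (j : ℕ)) :
      SBRel n (of (.s i) * of (.s j)) (of (.s j) * of (.s i))
  | comm_xx (i j : Fin (n - 1)) (h : (i : ℕ) + 1 < (j : ℕ)) :
      SBRel n (of (.x i) * of (.x j)) (of (.x j) * of (.x i))
  | comm_xs (i j : Fin (n - 1)) (h1 : (i : ℕ) ≠ (j : ℕ) + 1) (h2 : (j : ℕ) ≠ (i : ℕ) + 1) :
      SBRel n (of (.x i) * of (.s j)) (of (.s j) * of (.x i))
  | braid (i : ℕ) (h : i + 1 < n - 1) :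
      SBRel n (of (.s ⟨i, by omega⟩) * of (.s ⟨i + 1, h⟩) * of (.s ⟨i, by omega⟩))
        (of (.s ⟨i + 1, h⟩) * of (.s ⟨i, by omega⟩) * of (.s ⟨i + 1, h⟩))
  | mixed₁ (i : ℕ) (h : i + 1 < n - 1) :
      SBRel n (of (.s ⟨i, by omega⟩) * of (.s ⟨i + 1, h⟩) * of (.x ⟨i, by omega⟩))
        (of (.x ⟨i + 1, h⟩) * of (.s ⟨i, by omega⟩) * of (.s ⟨i + 1, h⟩))
  | mixed₂ (i : ℕ) (h : i + 1 < n - 1) :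
      SBRel n (of (.s ⟨i + 1, h⟩) * of (.s ⟨i, by omega⟩) * of (.x ⟨i + 1, h⟩))
        (of (.x ⟨i, by omega⟩) * of (.s ⟨i + 1, h⟩) * of (.s ⟨i, by omega⟩))
  | inv_right (i : Fin (n - 1)) : SBRel n (of (.s i) * of (.sInv i)) 1
  | inv_left (i : Fin (n - 1)) : SBRel n (of (.sInv i) * of (.s i)) 1

/-- The singular braid monoid `SB_n`. -/
def SingularBraidMonoid (n : ℕ) := PresentedMonoid (SBRel n)

instance (n : ℕ) : Monoid (SingularBraidMonoid n) :=
  inferInstanceAs (Monoid (PresentedMonoid (SBRel n)))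

namespace SBAux

variable (n : ℕ)

theorem mk_rel {a b : FreeMonoid (SBGen n)} (h : SBRel n a b) :
    PresentedMonoid.mk (SBRel n) a = PresentedMonoid.mk (SBRel n) b :=
  Quotient.sound (ConGen.Rel.of _ _ h)

/-- σ generator with junk value 1 out of range. -/
def sg (i : ℕ) : SingularBraidMonoid n :=
  if h : i < n - 1 then PresentedMonoid.of (SBRel n) (.s ⟨i, h⟩) else 1

/-- x generator with junk value 1 out of range. -/
def xg (i : ℕ) : SingularBraidMonoid n :=
  if h : i < n - 1 then PresentedMonoid.of (SBRel n) (.x ⟨i, h⟩) else 1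

theorem sg_pos {i : ℕ} (h : i < n - 1) : sg n i = PresentedMonoid.of (SBRel n) (.s ⟨i, h⟩) :=
  dif_pos h

theorem sg_neg {i : ℕ} (h : ¬ i < n - 1) : sg n i = 1 := dif_neg h

theorem xg_pos {i : ℕ} (h : i < n - 1) : xg n i = PresentedMonoid.of (SBRel n) (.x ⟨i, h⟩) :=
  dif_pos h

theorem xg_neg {i : ℕ} (h : ¬ i < n - 1) : xg n i = 1 := dif_neg h

theorem sg_comm {i j : ℕ} (hij : i + 1 < j) : Commute (sg n i) (sg n j) := by
  by_cases h1 : i < n - 1 <;> by_cases h2 : j < n - 1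
  · rw [sg_pos n h1, sg_pos n h2]
    have := mk_rel n (SBRel.comm_ss ⟨i, h1⟩ ⟨j, h2⟩ hij)
    simp only [map_mul] at this
    exact this
  · rw [sg_neg n h2]; exact Commute.one_right _
  · rw [sg_neg n h1]; exact Commute.one_left _
  · rw [sg_neg n h1]; exact Commute.one_left _

theorem xs_comm {i j : ℕ} (h1 : i ≠ j + 1) (h2 : j ≠ i + 1) : Commute (xg n i) (sg n j) := by
  by_cases hi : i < n - 1 <;> by_cases hj : j < n - 1
  · rw [xg_pos n hi, sg_pos n hj]
    have := mk_rel n (SBRel.comm_xs ⟨i, hi⟩ ⟨j, hj⟩ h1 h2)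
    simp only [map_mul] at this
    exact this
  · rw [sg_neg n hj]; exact Commute.one_right _
  · rw [xg_neg n hi]; exact Commute.one_left _
  · rw [xg_neg n hi]; exact Commute.one_left _

theorem m1 {i : ℕ} (h : i + 1 < n - 1) :
    sg n i * sg n (i + 1) * xg n i = xg n (i + 1) * sg n i * sg n (i + 1) := by
  have hi : i < n - 1 := by omega
  have := mk_rel n (SBRel.mixed₁ i h)
  simp only [map_mul] at this
  rw [sg_pos n hi, sg_pos n h, xg_pos n hi, xg_pos n h]
  exact this

theorem m2 {i : ℕ} (h : i + 1 < n - 1) :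
    sg n (i + 1) * sg n i * xg n (i + 1) = xg n i * sg n (i + 1) * sg n i := by
  have hi : i < n - 1 := by omega
  have := mk_rel n (SBRel.mixed₂ i h)
  simp only [map_mul] at this
  rw [sg_pos n hi, sg_pos n h, xg_pos n hi, xg_pos n h]
  exact this


/-- product σ_a σ_{a+1} ⋯ σ_{a+k-1} -/
def PP (a k : ℕ) : SingularBraidMonoid n :=
  ((List.range k).map (fun t => sg n (a + t))).prod

theorem PP_zero (a : ℕ) : PP n a 0 = 1 := rfl

theorem PP_succ (a k : ℕ) : PP n a (k + 1) = PP n a k * sg n (a + k) := by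
  simp [PP, List.range_succ]

theorem PP_succ' (a k : ℕ) : PP n a (k + 1) = sg n a * PP n (a + 1) k := by
  simp only [PP, List.range_succ_eq_map, List.map_cons, List.map_map, List.prod_cons,
    Nat.add_zero]
  refine congrArg _ (congrArg _ (List.map_congr_left fun t _ => ?_))
  simp only [Function.comp_apply, Nat.succ_eq_add_one]
  congr 1
  omega

theorem PP_add (a k l : ℕ) : PP n a (k + l) = PP n a k * PP n (a + k) l := by
  induction l with
  | zero => simp [PP_zero]
  | succ l ih =>
    show PP n a ((k + l) + 1) = _
    rw [PP_succ, ih, PP_succ, mul_assoc]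
    have : a + (k + l) = a + k + l := by omega
    rw [this]

theorem commute_PP {c : SingularBraidMonoid n} {a k : ℕ}
    (h : ∀ t, t < k → Commute c (sg n (a + t))) : Commute c (PP n a k) := by
  apply Commute.list_prod_right
  intro x hx
  simp only [List.mem_map, List.mem_range] at hx
  obtain ⟨t, ht, rfl⟩ := hx
  exact h t ht

def DD (a k : ℕ) : SingularBraidMonoid n :=
  ((List.range k).map (fun t => sg n (a + t + 1) * sg n (a + t))).prod

theorem DD_succ (a k : ℕ) : DD n a (k + 1) = DD n a k * (sg n (a + k + 1) * sg n (a + k)) := by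
  simp [DD, List.range_succ]

theorem claim1 : ∀ (k a : ℕ), PP n (a + 1) k * PP n a k = DD n a k
  | 0, a => by simp [PP_zero, DD]
  | (k + 1), a => by
    have hDD : DD n a (k + 1) = (sg n (a + 1) * sg n a) * DD n (a + 1) k := by
      simp only [DD, List.range_succ_eq_map, List.map_cons, List.map_map, List.prod_cons,
        Nat.add_zero]
      refine congrArg _ (congrArg _ (List.map_congr_left fun t _ => ?_))
      simp only [Function.comp_apply, Nat.succ_eq_add_one]
      congr 2 <;> omega
    have hc : Commute (sg n a) (PP n (a + 1 + 1) k) := by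
      apply commute_PP
      intro t _
      exact sg_comm n (by omega)
    rw [PP_succ', PP_succ', hDD, ← claim1 k (a + 1)]
    calc (sg n (a + 1) * PP n (a + 1 + 1) k) * (sg n a * PP n (a + 1) k)
        = sg n (a + 1) * ((PP n (a + 1 + 1) k * sg n a) * PP n (a + 1) k) := by
          simp only [mul_assoc]
      _ = sg n (a + 1) * ((sg n a * PP n (a + 1 + 1) k) * PP n (a + 1) k) := by
          rw [← hc.eq]
      _ = (sg n (a + 1) * sg n a) * (PP n (a + 1 + 1) k * PP n (a + 1) k) := by
          simp only [mul_assoc]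

theorem claim2 : ∀ (j a : ℕ), a + j < n - 1 →
    DD n a j * xg n (a + j) = xg n a * DD n a j
  | 0, a, _ => by simp [DD]
  | (j + 1), a, h => by
    have ih := claim2 j a (by omega)
    rw [DD_succ]
    calc DD n a j * (sg n (a + j + 1) * sg n (a + j)) * xg n (a + (j + 1))
        = DD n a j * (sg n (a + j + 1) * sg n (a + j) * xg n (a + j + 1)) := by
          simp [mul_assoc, Nat.add_assoc]
      _ = DD n a j * (xg n (a + j) * sg n (a + j + 1) * sg n (a + j)) := by
          rw [m2 n (by omega)]
      _ = (DD n a j * xg n (a + j)) * (sg n (a + j + 1) * sg n (a + j)) := by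
          simp [mul_assoc]
      _ = xg n a * (DD n a j * (sg n (a + j + 1) * sg n (a + j))) := by
          rw [ih]; simp [mul_assoc]

theorem stepA {i : ℕ} (h : i + 1 < n - 1) :
    PP n 0 (n - 1) * xg n i = xg n (i + 1) * PP n 0 (n - 1) := by
  obtain ⟨l, hl⟩ : ∃ l, n - 1 = (i + 2) + l := ⟨n - 1 - (i + 2), by omega⟩
  have hx1 : Commute (xg n (i + 1)) (PP n 0 i) := by
    apply commute_PP
    intro t ht
    exact xs_comm n (by omega) (by omega)
  have hx2 : Commute (xg n i) (PP n (i + 2) l) := by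
    apply commute_PP
    intro t _
    exact xs_comm n (by omega) (by omega)
  have hsplit : PP n 0 (n - 1) = PP n 0 i * (sg n i * (sg n (i + 1) * PP n (i + 2) l)) := by
    rw [hl, PP_add n 0 (i + 2) l, show (0:ℕ) + (i + 2) = i + 2 by omega,
      show i + 2 = (i + 1) + 1 from rfl, PP_succ, PP_succ,
      show (0:ℕ) + (i + 1) = i + 1 by omega, show (0:ℕ) + i = i by omega]
    simp only [mul_assoc]
  have hm1 : sg n i * (sg n (i + 1) * (xg n i * PP n (i + 2) l))
      = xg n (i + 1) * (sg n i * (sg n (i + 1) * PP n (i + 2) l)) := by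
    have := congrArg (· * PP n (i + 2) l) (m1 n h)
    simpa only [mul_assoc] using this
  rw [hsplit]
  calc PP n 0 i * (sg n i * (sg n (i + 1) * PP n (i + 2) l)) * xg n i
      = PP n 0 i * (sg n i * (sg n (i + 1) * (PP n (i + 2) l * xg n i))) := by
        simp only [mul_assoc]
    _ = PP n 0 i * (sg n i * (sg n (i + 1) * (xg n i * PP n (i + 2) l))) := by
        rw [hx2.eq]
    _ = PP n 0 i * (xg n (i + 1) * (sg n i * (sg n (i + 1) * PP n (i + 2) l))) := by
        rw [hm1]
    _ = xg n (i + 1) * (PP n 0 i * (sg n i * (sg n (i + 1) * PP n (i + 2) l))) := by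
        rw [← mul_assoc, ← hx1.eq, mul_assoc]

theorem chain (hn : 2 ≤ n) : ∀ k, k ≤ n - 2 →
    PP n 0 (n - 1) ^ k * xg n 0 = xg n k * PP n 0 (n - 1) ^ k
  | 0, _ => by simp
  | (k + 1), hk => by
    have ih := chain hn k (by omega)
    rw [pow_succ', mul_assoc, ih, ← mul_assoc, stepA n (by omega), mul_assoc]

theorem stepB (hn : 2 ≤ n) :
    PP n 0 (n - 1) * PP n 0 (n - 1) * xg n (n - 2) = xg n 0 * (PP n 0 (n - 1) * PP n 0 (n - 1)) := by
  set a := n - 2 with ha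
  have hd1 : PP n 0 (n - 1) = PP n 0 a * sg n a := by
    rw [show n - 1 = a + 1 by omega, PP_succ, show (0:ℕ) + a = a by omega]
  have hd2 : PP n 0 (n - 1) = sg n 0 * PP n 1 a := by
    rw [show n - 1 = a + 1 by omega, PP_succ']
  have h3 : PP n 1 a * PP n 0 a = DD n 0 a := claim1 n a 0
  have h4 : DD n 0 a * xg n a = xg n 0 * DD n 0 a := by
    have := claim2 n a 0 (by omega)
    rwa [show (0:ℕ) + a = a by omega] at this
  have h5 : Commute (xg n a) (sg n a) := xs_comm n (by omega) (by omega)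
  have h6 : Commute (xg n 0) (sg n 0) := xs_comm n (by omega) (by omega)
  calc PP n 0 (n - 1) * PP n 0 (n - 1) * xg n a
      = (sg n 0 * PP n 1 a) * (PP n 0 a * sg n a) * xg n a := by rw [← hd1, ← hd2]
    _ = sg n 0 * (PP n 1 a * (PP n 0 a * (sg n a * xg n a))) := by simp only [mul_assoc]
    _ = sg n 0 * (PP n 1 a * (PP n 0 a * (xg n a * sg n a))) := by rw [← h5.eq]
    _ = sg n 0 * ((PP n 1 a * PP n 0 a * xg n a) * sg n a) := by simp only [mul_assoc]
    _ = sg n 0 * ((DD n 0 a * xg n a) * sg n a) := by rw [h3]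
    _ = sg n 0 * ((xg n 0 * DD n 0 a) * sg n a) := by rw [h4]
    _ = sg n 0 * ((xg n 0 * (PP n 1 a * PP n 0 a)) * sg n a) := by rw [h3]
    _ = (sg n 0 * xg n 0) * (PP n 1 a * (PP n 0 a * sg n a)) := by simp only [mul_assoc]
    _ = (xg n 0 * sg n 0) * (PP n 1 a * (PP n 0 a * sg n a)) := by rw [← h6.eq]
    _ = xg n 0 * ((sg n 0 * PP n 1 a) * (PP n 0 a * sg n a)) := by simp only [mul_assoc]
    _ = xg n 0 * (PP n 0 (n - 1) * PP n 0 (n - 1)) := by rw [← hd1, ← hd2]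

theorem xg_zero (hn : 2 ≤ n) (h : (0:ℕ) < n - 1) :
    PresentedMonoid.of (SBRel n) (.x ⟨0, h⟩) = xg n 0 := by
  unfold xg
  exact (xg_pos n h).symm

theorem delta_eq :
    PresentedMonoid.mk (SBRel n)
      ((List.ofFn (fun j : Fin (n - 1) => FreeMonoid.of (SBGen.s j))).prod) = PP n 0 (n - 1) := by
  rw [map_list_prod, List.map_ofFn]
  show (List.ofFn (fun j : Fin (n - 1) =>
      PresentedMonoid.mk (SBRel n) (FreeMonoid.of (SBGen.s j)))).prod = PP n 0 (n - 1)
  have hlist : (List.ofFn (fun j : Fin (n - 1) =>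
      PresentedMonoid.mk (SBRel n) (FreeMonoid.of (SBGen.s j))))
      = (List.range (n - 1)).map (fun t => sg n (0 + t)) := by
    apply List.ext_getElem
    · have hlen : ((List.range (n - 1)).map (fun t => sg n (0 + t))).length = n - 1 := by simp
      exact List.length_ofFn.trans hlen.symm
    · intro i h1 h2
      have key : ((List.range (n - 1)).map (fun t => sg n (0 + t)))[i]'h2 = sg n i := by simp
      rw [List.getElem_ofFn]
      exact (sg_pos n (by simpa using h1)).symm.trans key.symm
  rw [hlist]
  rfl

end SBAux

/-- In `SB_n`, the element `σⁿ` where `σ = σ₁σ₂⋯σ_{n-1}` commutes with `x₁`. -/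
theorem sigma_pow_n_commutes_with_x (n : ℕ) (hn : 2 ≤ n) :
    PresentedMonoid.mk (SBRel n)
        ((List.ofFn (fun j : Fin (n - 1) => FreeMonoid.of (SBGen.s j))).prod) ^ n *
      PresentedMonoid.of (SBRel n) (.x ⟨0, by omega⟩) =
    PresentedMonoid.of (SBRel n) (.x ⟨0, by omega⟩) *
      PresentedMonoid.mk (SBRel n)
        ((List.ofFn (fun j : Fin (n - 1) => FreeMonoid.of (SBGen.s j))).prod) ^ n := by
  rw [SBAux.delta_eq n, SBAux.xg_zero n hn]
  have h2 : n = 2 + (n - 2) := by omega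
  calc SBAux.PP n 0 (n - 1) ^ n * SBAux.xg n 0
      = SBAux.PP n 0 (n - 1) ^ 2 * SBAux.PP n 0 (n - 1) ^ (n - 2) * SBAux.xg n 0 := by
        rw [← pow_add, ← h2]
    _ = SBAux.PP n 0 (n - 1) ^ 2 * (SBAux.PP n 0 (n - 1) ^ (n - 2) * SBAux.xg n 0) := by
        rw [mul_assoc]
    _ = SBAux.PP n 0 (n - 1) ^ 2 * (SBAux.xg n (n - 2) * SBAux.PP n 0 (n - 1) ^ (n - 2)) := by
        rw [SBAux.chain n hn (n - 2) le_rfl]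
    _ = (SBAux.PP n 0 (n - 1) * SBAux.PP n 0 (n - 1) * SBAux.xg n (n - 2)) *
          SBAux.PP n 0 (n - 1) ^ (n - 2) := by
        rw [pow_two]; simp only [mul_assoc]
    _ = (SBAux.xg n 0 * (SBAux.PP n 0 (n - 1) * SBAux.PP n 0 (n - 1))) *
          SBAux.PP n 0 (n - 1) ^ (n - 2) := by
        rw [SBAux.stepB n hn]
    _ = SBAux.xg n 0 * SBAux.PP n 0 (n - 1) ^ n := by
        rw [mul_assoc, mul_assoc, ← pow_succ', ← pow_succ',
          show n - 2 + 1 + 1 = n by omega]
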